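/- Let S = {i ∈ ℤ : i ≡ 1 or 4 (mod 5)} and S' = {i ∈ ℤ : i ≡ 2 or 3 (mod 5)}. There is no group automorphism α of ℤ with α(S) = S', even though Cay(ℤ, S) ≅ Cay(ℤ, S'). Hence Cay(ℤ, S) is not a CI-graph and ℤ is not a CI-group. -/

import Mathlib

/-- The Cayley graph of an additive group `A` with connection set `S`. -/
def cayAdd (A : Type*) [AddGroup A] (S : Set A) : SimpleGraph A where
  Adj x y := x ≠ y ∧ y - x ∈ S ∧ x - y ∈ S
  symm := ⟨fun _ _ ⟨h1, h2, h3⟩ => ⟨h1.symm, h3, h2⟩⟩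
  loopless := ⟨fun _ ⟨h, _⟩ => h rfl⟩

/-- S = {i : i ≡ 1 or 4 (mod 5)} -/
def S14 : Set ℤ := {i : ℤ | i % 5 = 1 ∨ i % 5 = 4}

/-- S' = {i : i ≡ 2 or 3 (mod 5)} -/
def S23 : Set ℤ := {i : ℤ | i % 5 = 2 ∨ i % 5 = 3}

/-- The "multiplication by 2 mod 5" bijection of ℤ. -/
def fEquiv : ℤ ≃ ℤ where
  toFun x := x + x % 5
  invFun n := n - 3 * n % 5
  left_inv x := by show (x + x % 5) - 3 * (x + x % 5) % 5 = x; omega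
  right_inv n := by show (n - 3 * n % 5) + (n - 3 * n % 5) % 5 = n; omega

/-- Cay(ℤ, S) ≅ Cay(ℤ, S'), but no automorphism of ℤ carries S to S';
hence Cay(ℤ, S) is not a CI-graph and ℤ is not a CI-group. -/
theorem stmt_2 :
    Nonempty (cayAdd ℤ S14 ≃g cayAdd ℤ S23) ∧
      ¬ ∃ α : ℤ ≃+ ℤ, α '' S14 = S23 := by
  constructor
  · refine ⟨⟨fEquiv, ?_⟩⟩
    intro x y
    simp only [cayAdd, S14, S23, Set.mem_setOf_eq, fEquiv, Equiv.coe_fn_mk, ne_eq]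
    omega
  · rintro ⟨α, hα⟩
    have h1 : α 1 ∈ S23 := by
      rw [← hα]
      exact ⟨1, Or.inl rfl, rfl⟩
    have h2 : (α 1) * α.symm 1 = 1 := by
      have h3 : α.symm (α 1) = (α 1) * α.symm 1 := by
        calc α.symm (α 1) = α.symm ((α 1) • (1 : ℤ)) := by rw [smul_eq_mul, mul_one]
        _ = (α 1) • α.symm 1 := map_zsmul _ _ _
        _ = (α 1) * α.symm 1 := smul_eq_mul ..
      rw [← h3, α.symm_apply_apply]
    have h4 : α 1 = 1 ∨ α 1 = -1 :=
      Int.isUnit_iff.mp (IsUnit.of_mul_eq_one _ h2)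
    simp only [S23, Set.mem_setOf_eq] at h1
    omega
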